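/- For every positive integer n, D(C_n, -1) = 3 if n ≡ 0 (mod 4), and D(C_n, -1) = -1 otherwise. -/

import Mathlib

open Polynomial SimpleGraph

/-- `S` is a dominating set of `G`: every vertex is in `S` or adjacent to a vertex of `S`. -/
def IsDomSet {V : Type*} (G : SimpleGraph V) (S : Finset V) : Prop :=
  ∀ v : V, v ∈ S ∨ ∃ u ∈ S, G.Adj u v

/-- The domination polynomial `D(G,x) = ∑ d(G,i) xⁱ`. -/
noncomputable def domPoly {V : Type*} [Fintype V] (G : SimpleGraph V) : Polynomial ℤ :=
  ∑ i ∈ Finset.range (Fintype.card V + 1),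
    (Nat.card {S : Finset V // IsDomSet G S ∧ S.card = i} : ℤ) • (X : Polynomial ℤ) ^ i

namespace DomAux

/-- sign of a bit -/
def sgn (b : Bool) : ℤ := if b then -1 else 1

/-- signed weight of a bit string -/
def wt {k : ℕ} (f : Fin k → Bool) : ℤ := ∏ i, sgn (f i)

/-- linear "no 3 consecutive falses" condition for the string p,q,f₀,…,f_{k-1},c,d,
checking the k+2 windows starting at positions 0,…,k+1. -/
def LC : (k : ℕ) → Bool → Bool → Bool → Bool → (Fin k → Bool) → Bool
  | 0, p, q, c, d, _ => (p || q || c) && (q || c || d)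
  | k+1, p, q, c, d, f => (p || q || f 0) && LC k q (f 0) c d (fun i => f i.succ)

/-- semantic signed sum -/
def R (k : ℕ) (p q c d : Bool) : ℤ :=
  ∑ f : Fin k → Bool, if LC k p q c d f then wt f else 0

/-- recursive (transfer-matrix) counterpart of `R` -/
def G : ℕ → Bool → Bool → Bool → Bool → ℤ
  | 0, p, q, c, d => if (p || q || c) && (q || c || d) then 1 else 0
  | k+1, p, q, c, d => -(G k q true c d) + (if p || q then G k q false c d else 0)

lemma G_succ (m : ℕ) (p q c d : Bool) :
    G (m+1) p q c d = -(G m q true c d) + (if p || q then G m q false c d else 0) := rfl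

lemma sum_cons (N : ℕ) (h : (Fin (N+1) → Bool) → ℤ) :
    ∑ g : Fin (N+1) → Bool, h g
      = ∑ a : Bool, ∑ f : Fin N → Bool, h (Fin.cons a f) := by
  rw [← Equiv.sum_comp (Fin.consEquiv (fun _ => Bool)) h, Fintype.sum_prod_type]
  rfl

lemma wt_cons {N : ℕ} (a : Bool) (f : Fin N → Bool) :
    wt (Fin.cons a f) = sgn a * wt f := by
  simp [wt, Fin.prod_univ_succ]

lemma LC_cons {k : ℕ} (p q c d e : Bool) (f : Fin k → Bool) :
    LC (k+1) p q c d (Fin.cons e f) = ((p || q || e) && LC k q e c d f) := by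
  simp [LC]

lemma R_succ (k : ℕ) (p q c d : Bool) :
    R (k+1) p q c d = -(R k q true c d) + (if p || q then R k q false c d else 0) := by
  rw [R, sum_cons, Fintype.sum_bool]
  simp only [LC_cons, wt_cons]
  congr 1
  · rw [R, ← Finset.sum_neg_distrib]
    refine Finset.sum_congr rfl fun f _ => ?_
    simp only [Bool.or_true, Bool.true_and, sgn]
    split <;> simp
  · cases hpq : (p || q) with
    | true => simp [R, sgn]
    | false => simp [hpq]

lemma R_eq_G (k : ℕ) : ∀ p q c d, R k p q c d = G k p q c d := by
  induction k with
  | zero => intro p q c d; simp [R, G, LC, wt]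
  | succ k ih => intro p q c d; rw [R_succ, G_succ, ih, ih]

lemma G_periodic : ∀ k, 1 ≤ k → ∀ p q c d, G (k+4) p q c d = G k p q c d := by
  intro k hk
  induction k with
  | zero => omega
  | succ k ih =>
    intro p q c d
    rcases Nat.eq_or_lt_of_le hk with h | h
    · -- k+1 = 1
      have : k = 0 := by omega
      subst this
      revert p q c d; decide
    · have hk1 : 1 ≤ k := by omega
      show G ((k+4)+1) p q c d = G (k+1) p q c d
      rw [G_succ (k+4), ih hk1, ih hk1, G_succ k]

/-- final combined value -/
def F (k : ℕ) : ℤ := ∑ a : Bool, ∑ b : Bool, sgn a * sgn b * G k a b a b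

lemma F_periodic (k : ℕ) (hk : 1 ≤ k) : F (k+4) = F k := by
  unfold F
  refine Finset.sum_congr rfl fun a _ => Finset.sum_congr rfl fun b _ => ?_
  rw [G_periodic k hk]

lemma F_val : ∀ k, F k = if (k+2) % 4 = 0 then 3 else -1 := by
  intro k
  induction k using Nat.strong_induction_on with
  | _ k ih =>
    rcases Nat.lt_or_ge k 5 with h | h
    · interval_cases k <;> decide
    · have h4 : k - 4 + 4 = k := by omega
      have h1 : 1 ≤ k - 4 := by omega
      have := F_periodic (k - 4) h1
      rw [h4] at this
      rw [this, ih (k-4) (by omega)]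
      have : (k - 4 + 2) % 4 = (k + 2) % 4 := by omega
      rw [this]

/-- the infinite stream p, q, f₀, …, f_{k-1}, c, d, d, d, … -/
def str (k : ℕ) (p q c d : Bool) (f : Fin k → Bool) : ℕ → Bool :=
  fun j => if j = 0 then p else if j = 1 then q else
    if h : j - 2 < k then f ⟨j - 2, h⟩ else if j = k + 2 then c else d

lemma str_shift (k : ℕ) (p q c d : Bool) (f : Fin (k+1) → Bool) (j : ℕ) :
    str k q (f 0) c d (fun i => f i.succ) j = str (k+1) p q c d f (j+1) := by
  rcases j with _ | _ | m
  · simp [str]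
  · simp [str, Fin.mk_zero]
  · simp only [str]
    split_ifs <;>
      first | rfl | contradiction | omega | (apply congrArg f; apply Fin.ext; simp; omega)

lemma forall_shift (m : ℕ) (P : ℕ → Prop) :
    (∀ j < m + 1, P j) ↔ P 0 ∧ ∀ j < m, P (j+1) := by
  constructor
  · exact fun h => ⟨h 0 (by omega), fun j hj => h (j+1) (by omega)⟩
  · rintro ⟨h0, h⟩ j hj
    cases j with
    | zero => exact h0
    | succ j => exact h j (by omega)

lemma LC_iff (k : ℕ) : ∀ (p q c d : Bool) (f : Fin k → Bool),
    (LC k p q c d f = true) ↔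
      ∀ j < k + 2, (str k p q c d f j || str k p q c d f (j+1)
        || str k p q c d f (j+2)) = true := by
  induction k with
  | zero =>
    intro p q c d f
    constructor
    · intro h j hj
      simp only [LC, Bool.and_eq_true] at h
      interval_cases j <;> simp [str, h.1, h.2]
    · intro h
      have h0 := h 0 (by omega)
      have h1 := h 1 (by omega)
      simp only [str] at h0 h1
      norm_num at h0 h1
      simp [LC, h0, h1]
  | succ k ih =>
    intro p q c d f
    have hLC : LC (k+1) p q c d f
        = ((p || q || f 0) && LC k q (f 0) c d (fun i => f i.succ)) := rfl
    rw [hLC, Bool.and_eq_true, ih]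
    have hw0 : (str (k+1) p q c d f 0 || str (k+1) p q c d f 1 || str (k+1) p q c d f 2)
        = (p || q || f 0) := by
      simp [str, Fin.mk_zero]
    have hws : ∀ j, (str k q (f 0) c d (fun i => f i.succ) j
          || str k q (f 0) c d (fun i => f i.succ) (j+1)
          || str k q (f 0) c d (fun i => f i.succ) (j+2))
        = (str (k+1) p q c d f (j+1) || str (k+1) p q c d f (j+1+1)
          || str (k+1) p q c d f (j+1+2)) := by
      intro j
      rw [str_shift k p q c d f j, str_shift k p q c d f (j+1), str_shift k p q c d f (j+2)]
    have hP0 : (str (k+1) p q c d f 0 || str (k+1) p q c d f (0+1)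
        || str (k+1) p q c d f (0+2)) = (p || q || f 0) := hw0
    rw [show k + 1 + 2 = (k + 2) + 1 from rfl, forall_shift (k+2)]
    simp only [hws, hP0]

lemma cons_cons_mk (k : ℕ) (a b : Bool) (f : Fin k → Bool) :
    ∀ (j : ℕ) (h : j < k+2), (Fin.cons a (Fin.cons b f) : Fin (k+2) → Bool) ⟨j, h⟩ = str k a b a b f j
  | 0, h => by simp [str]
  | 1, h => by
      have e : (⟨1, h⟩ : Fin (k+2)) = (⟨0, by omega⟩ : Fin (k+1)).succ := rfl
      rw [e, Fin.cons_succ, Fin.mk_zero, Fin.cons_zero]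
      simp [str]
  | (m+2), h => by
      have e : (⟨m+2, h⟩ : Fin (k+2)) = ((⟨m, by omega⟩ : Fin k).succ).succ := rfl
      rw [e, Fin.cons_succ, Fin.cons_succ]
      have hm : m < k := by omega
      simp [str, hm]

lemma str_mod (k : ℕ) (a b : Bool) (f : Fin k → Bool) (j : ℕ) (hj : j ≤ k+3) :
    str k a b a b f j = str k a b a b f (j % (k+2)) := by
  rcases Nat.lt_or_ge j (k+2) with h | h
  · rw [Nat.mod_eq_of_lt h]
  · have : j = k+2 ∨ j = k+3 := by omega
    rcases this with rfl | rfl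
    · rw [Nat.mod_self]
      show str k a b a b f (k+2) = str k a b a b f 0
      unfold str
      rw [if_neg (by omega), if_neg (by omega), dif_neg (by omega), if_pos rfl, if_pos rfl]
    · have e : (k+3) % (k+2) = 1 := by
        rw [show k+3 = (k+2)+1 from rfl, Nat.add_mod_left, Nat.mod_eq_of_lt (by omega)]
      rw [e]
      show str k a b a b f (k+3) = str k a b a b f 1
      unfold str
      rw [if_neg (by omega), if_neg (by omega), dif_neg (by omega), if_neg (by omega),
        if_neg (by omega), if_pos rfl]

open Fin.CommRing in
lemma cyc_iff (k : ℕ) (a b : Bool) (f : Fin k → Bool) :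
    (∀ i : Fin (k+2), ((Fin.cons a (Fin.cons b f) : Fin (k+2) → Bool) i
      || (Fin.cons a (Fin.cons b f) : Fin (k+2) → Bool) (i+1)
      || (Fin.cons a (Fin.cons b f) : Fin (k+2) → Bool) (i+2)) = true)
    ↔ LC k a b a b f = true := by
  rw [LC_iff]
  have hval1 : ∀ i : Fin (k+2), ((i + 1 : Fin (k+2)) : ℕ) = (i.val + 1) % (k+2) := by
    intro i
    rw [Fin.val_add, Fin.val_one', Nat.add_mod_mod]
  have hval2 : ∀ i : Fin (k+2), ((i + 2 : Fin (k+2)) : ℕ) = (i.val + 2) % (k+2) := by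
    intro i
    rw [show i + 2 = (i+1)+1 from by ring, hval1, hval1, Nat.mod_add_mod]
  have key : ∀ (j : ℕ) (h : j < k+2),
      ((Fin.cons a (Fin.cons b f) : Fin (k+2) → Bool) ⟨j, h⟩
        || (Fin.cons a (Fin.cons b f) : Fin (k+2) → Bool) (⟨j, h⟩ + 1)
        || (Fin.cons a (Fin.cons b f) : Fin (k+2) → Bool) (⟨j, h⟩ + 2))
      = (str k a b a b f j || str k a b a b f (j+1) || str k a b a b f (j+2)) := by
    intro j h
    have e1 : (Fin.cons a (Fin.cons b f) : Fin (k+2) → Bool) (⟨j, h⟩ + 1) = str k a b a b f (j+1) := by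
      have : (⟨j, h⟩ + 1 : Fin (k+2)) = ⟨(j+1) % (k+2), Nat.mod_lt _ (by omega)⟩ := by
        apply Fin.ext
        rw [hval1]
      rw [this, cons_cons_mk]
      exact (str_mod k a b f (j+1) (by omega)).symm
    have e2 : (Fin.cons a (Fin.cons b f) : Fin (k+2) → Bool) (⟨j, h⟩ + 2) = str k a b a b f (j+2) := by
      have : (⟨j, h⟩ + 2 : Fin (k+2)) = ⟨(j+2) % (k+2), Nat.mod_lt _ (by omega)⟩ := by
        apply Fin.ext
        rw [hval2]
      rw [this, cons_cons_mk]
      exact (str_mod k a b f (j+2) (by omega)).symm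
    rw [e1, e2, cons_cons_mk]
  constructor
  · intro h j hj
    rw [← key j hj]
    exact h ⟨j, hj⟩
  · intro h i
    have := h i.val i.isLt
    rw [← key i.val i.isLt] at this
    simpa using this

lemma T_bridge (k : ℕ) :
    (∑ g : Fin (k+2) → Bool,
        if (∀ i : Fin (k+2), (g i || g (i+1) || g (i+2)) = true) then wt g else 0)
      = F k := by
  rw [sum_cons]
  unfold F
  refine Finset.sum_congr rfl fun a _ => ?_
  rw [sum_cons]
  refine Finset.sum_congr rfl fun b _ => ?_
  rw [← R_eq_G, R, Finset.mul_sum]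
  refine Finset.sum_congr rfl fun f _ => ?_
  by_cases h : LC k a b a b f = true
  · rw [if_pos ((cyc_iff k a b f).mpr h), if_pos h, wt_cons, wt_cons, ← mul_assoc]
  · rw [if_neg (fun hc => h ((cyc_iff k a b f).mp hc)), if_neg h, mul_zero]

instance instDomDec {V : Type*} [Fintype V] [DecidableEq V] (G : SimpleGraph V)
    [DecidableRel G.Adj] : DecidablePred (IsDomSet G) := fun _ => by
  unfold IsDomSet; infer_instance

lemma eval_domPoly {V : Type*} [Fintype V] [DecidableEq V] (G : SimpleGraph V)
    [DecidableRel G.Adj] :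
    (domPoly G).eval (-1)
      = ∑ S ∈ Finset.univ.filter (fun S => IsDomSet G S), (-1 : ℤ)^S.card := by
  rw [domPoly, eval_finset_sum]
  simp only [eval_smul, eval_pow, eval_X, smul_eq_mul]
  rw [← Finset.sum_fiberwise_of_maps_to (g := fun S : Finset V => S.card)
    (t := Finset.range (Fintype.card V + 1))
    (fun S _ => Finset.mem_range.mpr (Nat.lt_succ_of_le
      (le_trans (Finset.card_le_univ S) (le_of_eq (Finset.card_univ)))))
    (fun S => (-1 : ℤ)^S.card)]
  refine Finset.sum_congr rfl fun i _ => ?_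
  rw [Finset.filter_filter]
  have step : ∑ S ∈ Finset.univ.filter (fun S => IsDomSet G S ∧ S.card = i), (-1:ℤ)^S.card
      = (Finset.univ.filter (fun S => IsDomSet G S ∧ S.card = i)).card • (-1:ℤ)^i := by
    rw [← Finset.sum_const]
    exact Finset.sum_congr rfl fun S hS => by rw [(Finset.mem_filter.mp hS).2.2]
  rw [step, nsmul_eq_mul]
  congr 1
  rw [Nat.card_eq_fintype_card, Fintype.card_subtype]

open Fin.CommRing in
lemma domset_iff (n : ℕ) (S : Finset (Fin (n+1))) :
    IsDomSet (cycleGraph (n+1)) S ↔ ∀ i : Fin (n+1), (i ∈ S ∨ i + 1 ∈ S ∨ i + 2 ∈ S) := by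
  match n with
  | 0 =>
    constructor
    · intro h i
      rcases h i with hm | ⟨u, _, ha⟩
      · exact Or.inl hm
      · exact absurd ha cycleGraph_one_adj
    · intro h v
      have e : ∀ w u : Fin (0+1), w = u := fun w u => Fin.ext (by omega)
      rcases h v with hm | hm | hm
      · exact Or.inl hm
      · exact Or.inl (by rw [e (v+1) v] at hm; exact hm)
      · exact Or.inl (by rw [e (v+2) v] at hm; exact hm)
  | n+1 =>
    have adj : ∀ u v : Fin (n+2), (cycleGraph (n+2)).Adj u v ↔ (u = v + 1 ∨ u = v - 1) := by
      intro u v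
      rw [cycleGraph_adj]
      constructor
      · rintro (h | h)
        · exact Or.inl (by rw [← h]; ring)
        · exact Or.inr (by rw [← h]; ring)
      · rintro (rfl | rfl) <;> [left; right] <;> ring
    constructor
    · intro h i
      rcases h (i+1) with hm | ⟨u, hu, ha⟩
      · exact Or.inr (Or.inl hm)
      · rw [adj] at ha
        rcases ha with rfl | rfl
        · refine Or.inr (Or.inr ?_)
          have e : i + 2 = i + 1 + 1 := by ring
          rw [e]; exact hu
        · refine Or.inl ?_
          have e : i = i + 1 - 1 := by ring
          rw [e]; exact hu
    · intro h v
      rcases h (v - 1) with hm | hm | hm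
      · exact Or.inr ⟨v - 1, hm, by rw [adj]; exact Or.inr rfl⟩
      · exact Or.inl (by simpa using hm)
      · refine Or.inr ⟨v - 1 + 2, hm, ?_⟩
        rw [adj]
        exact Or.inl (by ring)

lemma wt_decide (n : ℕ) (S : Finset (Fin n)) :
    wt (fun v => decide (v ∈ S)) = (-1 : ℤ)^S.card := by
  rw [wt]
  rw [Finset.prod_congr rfl (fun i _ => show sgn (decide (i ∈ S))
    = if i ∈ S then (-1:ℤ) else 1 from by by_cases h : i ∈ S <;> simp [sgn, h])]
  rw [Finset.prod_ite, Finset.prod_const, Finset.prod_const, one_pow, mul_one]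
  congr 1
  congr 1
  ext i
  simp

lemma finset_to_fun (n : ℕ) :
    ∑ S ∈ Finset.univ.filter (fun S => IsDomSet (cycleGraph (n+1)) S), (-1:ℤ)^S.card
    = ∑ g : Fin (n+1) → Bool,
        if (∀ i : Fin (n+1), (g i || g (i+1) || g (i+2)) = true) then wt g else 0 := by
  rw [Finset.sum_filter]
  have hbij : Function.Bijective
      (fun (S : Finset (Fin (n+1))) => (fun v => decide (v ∈ S) : Fin (n+1) → Bool)) := by
    constructor
    · intro S T h
      ext v
      have := congrFun h v
      simpa using this
    · intro g
      refine ⟨Finset.univ.filter (fun v => g v = true), funext fun v => ?_⟩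
      simp
  refine Fintype.sum_bijective _ hbij _ _ fun S => ?_
  by_cases h : IsDomSet (cycleGraph (n+1)) S
  · rw [if_pos h, if_pos, wt_decide]
    intro i
    rcases (domset_iff n S).mp h i with hm | hm | hm <;> simp [hm]
  · rw [if_neg h, if_neg]
    intro hc
    apply h
    rw [domset_iff]
    intro i
    have := hc i
    simp only [Bool.or_eq_true, decide_eq_true_eq] at this
    tauto

end DomAux

theorem domPoly_cycle_eval_neg_one (n : ℕ) (hn : 1 ≤ n) :
    (domPoly (cycleGraph n)).eval (-1) = if n % 4 = 0 then 3 else -1 := by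
  rcases n with _ | m
  · omega
  rw [DomAux.eval_domPoly, DomAux.finset_to_fun]
  rcases m with _ | k
  · -- n = 1
    norm_num
    decide
  · -- n = k + 2
    rw [DomAux.T_bridge k, DomAux.F_val k]
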